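/- Let x : ℕ → ℝ be a real sequence (indexed from 1). The series Σ_{i=1}^∞ x_i fails to converge to a finite limit if and only if for every nonnegative sequence (c_j)_{j≥1} with c_j → 0 there exists a sequence of block sizes n : ℕ → ℕ with n_j ≥ 1 for all j such that the posterior means m_k = (Σ_{j=1}^k 1/j² + Σ_{j=1}^k y_j)/(k + 2 Σ_{j=1}^k 1/j²) converge to 0 as k → ∞, where y_j = 1 if |S_j| ≤ c_j and y_j = 0 otherwise, and S_j is the j-th block sum determined by the block sizes n. -/

import Mathlib

open Filter Finset

/-- Cumulative block endpoints: `N n j = n 1 + ⋯ + n j`, with `N n 0 = 0`. -/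
noncomputable def blockEnd (n : ℕ → ℕ) (j : ℕ) : ℕ := ∑ k ∈ Finset.Icc 1 j, n k

/-- The `j`-th block sum `S j = ∑_{i = N_{j-1}+1}^{N_j} x i`. -/
noncomputable def blockSum (x : ℕ → ℝ) (n : ℕ → ℕ) (j : ℕ) : ℝ :=
  ∑ i ∈ Finset.Ioc (blockEnd n (j - 1)) (blockEnd n j), x i

/-- `y j = 1` if `|S j| ≤ c j` and `y j = 0` otherwise. -/
noncomputable def indicatorY (x : ℕ → ℝ) (n : ℕ → ℕ) (c : ℕ → ℝ) (j : ℕ) : ℝ :=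
  if |blockSum x n j| ≤ c j then 1 else 0

/-- Stage-`k` posterior mean
`m k = (∑_{j=1}^k 1/j² + ∑_{j=1}^k y j) / (k + 2 ∑_{j=1}^k 1/j²)`. -/
noncomputable def postMean (x : ℕ → ℝ) (n : ℕ → ℕ) (c : ℕ → ℝ) (k : ℕ) : ℝ :=
  (∑ j ∈ Finset.Icc 1 k, (1 : ℝ) / (j : ℝ) ^ 2 + ∑ j ∈ Finset.Icc 1 k, indicatorY x n c j) /
    ((k : ℝ) + 2 * ∑ j ∈ Finset.Icc 1 k, (1 : ℝ) / (j : ℝ) ^ 2)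

/-! ### Auxiliary definitions and lemmas -/

/-- Partial sums of the series. -/
noncomputable def pSum (x : ℕ → ℝ) (m : ℕ) : ℝ := ∑ i ∈ Finset.Icc 1 m, x i

lemma pSum_Ioc (x : ℕ → ℝ) (m : ℕ) : pSum x m = ∑ i ∈ Finset.Ioc 0 m, x i := by
  rw [pSum, ← Finset.Icc_add_one_left_eq_Ioc]
  rfl

lemma blockEnd_mono (n : ℕ → ℕ) {a b : ℕ} (h : a ≤ b) : blockEnd n a ≤ blockEnd n b :=
  Finset.sum_le_sum_of_subset (Finset.Icc_subset_Icc_right h)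

lemma sum_Ioc_eq_sub (x : ℕ → ℝ) {a b : ℕ} (h : a ≤ b) :
    ∑ i ∈ Finset.Ioc a b, x i = pSum x b - pSum x a := by
  rw [pSum_Ioc, pSum_Ioc, ← Finset.sum_Ioc_consecutive x (Nat.zero_le a) h]
  ring

lemma blockSum_eq (x : ℕ → ℝ) (n : ℕ → ℕ) (j : ℕ) :
    blockSum x n j = pSum x (blockEnd n j) - pSum x (blockEnd n (j - 1)) := by
  rw [blockSum, sum_Ioc_eq_sub x (blockEnd_mono n (Nat.sub_le j 1))]

lemma blockEnd_ge (n : ℕ → ℕ) (hn : ∀ j, 1 ≤ n j) (j : ℕ) : j ≤ blockEnd n j := by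
  have : (Finset.Icc 1 j).card • 1 ≤ ∑ k ∈ Finset.Icc 1 j, n k :=
    Finset.card_nsmul_le_sum _ _ _ (fun i _ => hn i)
  simpa [blockEnd, Nat.card_Icc] using this

lemma summable_inv_sq : Summable (fun j : ℕ => (1 : ℝ) / (j : ℝ) ^ 2) :=
  Real.summable_one_div_nat_pow.mpr one_lt_two

/-- The Basel-type constant bounding the partial sums `∑ 1/j²`. -/
noncomputable def baselC : ℝ := ∑' j : ℕ, (1 : ℝ) / (j : ℝ) ^ 2

lemma baselC_nonneg : 0 ≤ baselC :=
  tsum_nonneg (fun j => by positivity)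

lemma sum_inv_sq_nonneg (k : ℕ) : 0 ≤ ∑ j ∈ Finset.Icc 1 k, (1 : ℝ) / (j : ℝ) ^ 2 :=
  Finset.sum_nonneg (fun j _ => by positivity)

lemma sum_inv_sq_le (k : ℕ) : ∑ j ∈ Finset.Icc 1 k, (1 : ℝ) / (j : ℝ) ^ 2 ≤ baselC :=
  Summable.sum_le_tsum _ (fun i _ => by positivity) summable_inv_sq

lemma indicatorY_nonneg (x : ℕ → ℝ) (n : ℕ → ℕ) (c : ℕ → ℝ) (j : ℕ) :
    0 ≤ indicatorY x n c j := by
  rw [indicatorY]; split <;> norm_num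

lemma indicatorY_le_one (x : ℕ → ℝ) (n : ℕ → ℕ) (c : ℕ → ℝ) (j : ℕ) :
    indicatorY x n c j ≤ 1 := by
  rw [indicatorY]; split <;> norm_num

/-- Bayesian characterization of divergence (Theorem 2, path-wise content):
the series `∑_{i=1}^∞ x i` fails to converge to a finite limit iff for every
nonnegative sequence `c j → 0` there is a choice of block sizes `n j ≥ 1` such
that the posterior means tend to `0`. -/
theorem bayesian_characterization_of_divergence (x : ℕ → ℝ) :
    (¬ ∃ L : ℝ, Tendsto (fun m => ∑ i ∈ Finset.Icc 1 m, x i) atTop (nhds L)) ↔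
      ∀ c : ℕ → ℝ, (∀ j, 0 ≤ c j) → Tendsto c atTop (nhds 0) →
        ∃ n : ℕ → ℕ, (∀ j, 1 ≤ n j) ∧
          Tendsto (fun k => postMean x n c k) atTop (nhds 0) := by
  constructor
  · -- divergence → Bayesian detection
    intro hdiv c hc0 hcto
    have hnotC : ¬ CauchySeq (pSum x) := by
      intro hC
      exact hdiv (cauchySeq_tendsto_of_complete hC)
    rw [Metric.cauchySeq_iff] at hnotC
    push_neg at hnotC
    obtain ⟨ε, hε, H⟩ := hnotC
    -- from any point we can jump with increment at least ε/2
    have key : ∀ P : ℕ, ∃ q, P < q ∧ ε / 2 ≤ |pSum x q - pSum x P| := by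
      intro P
      obtain ⟨m, hm, m', hm', hd⟩ := H (P + 1)
      rw [Real.dist_eq] at hd
      by_cases h : ε / 2 ≤ |pSum x m - pSum x P|
      · exact ⟨m, hm, h⟩
      · refine ⟨m', hm', ?_⟩
        have tri : |pSum x m - pSum x m'| ≤ |pSum x m - pSum x P| + |pSum x P - pSum x m'| :=
          abs_sub_le _ _ _
        have hcomm : |pSum x P - pSum x m'| = |pSum x m' - pSum x P| := abs_sub_comm _ _
        push_neg at h
        linarith
    choose f hf1 hf2 using key
    obtain ⟨J, hJ⟩ := Metric.tendsto_atTop.mp hcto (ε / 2) (half_pos hε)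
    have hcJ : ∀ j, J ≤ j → c j < ε / 2 := by
      intro j hj
      have := hJ j hj
      rwa [Real.dist_eq, sub_zero, abs_of_nonneg (hc0 j)] at this
    -- recursive endpoints
    set Nf : ℕ → ℕ := fun j => Nat.rec 0 (fun j ih => if J ≤ j + 1 then f ih else ih + 1) j
      with hNf
    have hNsucc : ∀ j, Nf (j + 1) = if J ≤ j + 1 then f (Nf j) else Nf j + 1 := fun j => rfl
    have hNlt : ∀ j, Nf j < Nf (j + 1) := by
      intro j
      rw [hNsucc]
      split
      · exact hf1 _
      · exact Nat.lt_succ_self _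
    refine ⟨fun j => if j = 0 then 1 else Nf j - Nf (j - 1), ?_, ?_⟩
    · intro j
      cases j with
      | zero => simp
      | succ j =>
        simp only [Nat.succ_ne_zero, if_false, Nat.add_sub_cancel]
        have := hNlt j
        omega
    · set n : ℕ → ℕ := fun j => if j = 0 then 1 else Nf j - Nf (j - 1) with hn
      have hBE : ∀ j, blockEnd n j = Nf j := by
        intro j
        induction j with
        | zero => simp [blockEnd, hNf]
        | succ j ih =>
          rw [blockEnd, Finset.sum_Icc_succ_top (Nat.le_add_left 1 j)]
          have : ∑ k ∈ Finset.Icc 1 j, n k = Nf j := ih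
          rw [this, hn]
          simp only [Nat.succ_ne_zero, if_false, Nat.add_sub_cancel]
          have := hNlt j
          omega
      set J' := max J 1 with hJ'
      have hy0 : ∀ j, J' ≤ j → indicatorY x n c j = 0 := by
        intro j hj
        have hj1 : 1 ≤ j := le_trans (le_max_right _ _) hj
        have hjJ : J ≤ j := le_trans (le_max_left _ _) hj
        have hS : blockSum x n j = pSum x (Nf j) - pSum x (Nf (j - 1)) := by
          rw [blockSum_eq, hBE, hBE]
        have hjform : j = (j - 1) + 1 := by omega
        have hNfj : Nf j = f (Nf (j - 1)) := by
          conv_lhs => rw [hjform]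
          rw [hNsucc, if_pos (by omega)]
        have hlow : ε / 2 ≤ |blockSum x n j| := by
          rw [hS, hNfj]; exact hf2 _
        have hcj : c j < ε / 2 := hcJ j hjJ
        rw [indicatorY, if_neg]
        linarith
      -- the sum of indicators is bounded by J'
      have hYbd : ∀ k, ∑ j ∈ Finset.Icc 1 k, indicatorY x n c j ≤ (J' : ℝ) := by
        intro k
        have heq : ∑ j ∈ (Finset.Icc 1 k).filter (· < J'), indicatorY x n c j
            = ∑ j ∈ Finset.Icc 1 k, indicatorY x n c j := by
          apply Finset.sum_filter_of_ne
          intro j _ hne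
          by_contra hlt
          exact hne (hy0 j (by omega))
        rw [← heq]
        calc ∑ j ∈ (Finset.Icc 1 k).filter (· < J'), indicatorY x n c j
            ≤ ∑ _j ∈ (Finset.Icc 1 k).filter (· < J'), (1 : ℝ) :=
              Finset.sum_le_sum (fun j _ => indicatorY_le_one x n c j)
          _ = ((Finset.Icc 1 k).filter (· < J')).card := by simp
          _ ≤ (J' : ℝ) := by
              have hsub : (Finset.Icc 1 k).filter (· < J') ⊆ Finset.range J' := by
                intro a ha
                rw [Finset.mem_filter] at ha
                exact Finset.mem_range.mpr ha.2
              have := Finset.card_le_card hsub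
              rw [Finset.card_range] at this
              exact_mod_cast this
      -- squeeze
      apply squeeze_zero' (g := fun k : ℕ => (baselC + (J' : ℝ)) / k)
      · filter_upwards with k
        apply div_nonneg
        · exact add_nonneg (sum_inv_sq_nonneg k)
            (Finset.sum_nonneg fun j _ => indicatorY_nonneg x n c j)
        · exact add_nonneg (Nat.cast_nonneg k)
            (by linarith [sum_inv_sq_nonneg k])
      · filter_upwards [eventually_ge_atTop 1] with k hk
        rw [postMean]
        apply div_le_div₀
        · exact add_nonneg baselC_nonneg (Nat.cast_nonneg J')
        · exact add_le_add (sum_inv_sq_le k) (hYbd k)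
        · exact_mod_cast Nat.lt_of_lt_of_le Nat.zero_lt_one hk
        · linarith [sum_inv_sq_nonneg k]
      · exact tendsto_const_div_atTop_nhds_zero_nat _
  · -- Bayesian detection → divergence
    intro hRHS
    rintro ⟨L, hL⟩
    have hL' : Tendsto (pSum x) atTop (nhds L) := hL
    set e : ℕ → ℝ := fun m => |pSum x m - L| with he
    have he0 : Tendsto e atTop (nhds 0) := by
      have h1 : Tendsto (fun m => pSum x m - L) atTop (nhds (L - L)) :=
        hL'.sub (tendsto_const_nhds (x := L))
      have h2 := h1.abs
      rwa [sub_self, abs_zero] at h2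
    have bdd : BddAbove (Set.range e) := he0.bddAbove_range
    set g : ℕ → ℝ := fun j => ⨆ m : ℕ, e (m + j) with hg
    have hbddj : ∀ j, BddAbove (Set.range fun m => e (m + j)) := by
      intro j
      apply bdd.mono
      rintro y ⟨m, hm⟩
      exact ⟨m + j, hm⟩
    have hle : ∀ j m, j ≤ m → e m ≤ g j := by
      intro j m hm
      have h1 : e m = e ((m - j) + j) := by rw [Nat.sub_add_cancel hm]
      rw [h1]
      exact le_ciSup (hbddj j) (m - j)
    have hgle : ∀ j b, (∀ m, j ≤ m → e m ≤ b) → g j ≤ b := by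
      intro j b hb
      exact ciSup_le (fun m => hb (m + j) (Nat.le_add_left _ _))
    have hg0 : ∀ j, 0 ≤ g j := fun j => le_trans (abs_nonneg _) (hle j j le_rfl)
    set c : ℕ → ℝ := fun j => 2 * g (j - 1) with hc
    have hc0 : ∀ j, 0 ≤ c j := fun j => by
      have := hg0 (j - 1); simp only [hc]; linarith
    have hcto : Tendsto c atTop (nhds 0) := by
      rw [Metric.tendsto_atTop]
      intro δ hδ
      obtain ⟨M, hM⟩ := Metric.tendsto_atTop.mp he0 (δ / 4) (by linarith)
      refine ⟨M + 1, fun j hj => ?_⟩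
      have hgb : g (j - 1) ≤ δ / 4 := by
        apply hgle
        intro m hm
        have := hM m (by omega)
        rw [Real.dist_eq, sub_zero] at this
        have : |e m| < δ / 4 := this
        have := abs_nonneg (pSum x m - L)
        calc e m ≤ |e m| := le_abs_self _
          _ ≤ δ / 4 := le_of_lt (by assumption)
      rw [Real.dist_eq, sub_zero, abs_of_nonneg (hc0 j)]
      simp only [hc]
      linarith
    obtain ⟨n, hn1, hto⟩ := hRHS c hc0 hcto
    have hNge : ∀ j, j ≤ blockEnd n j := blockEnd_ge n hn1
    have hy1 : ∀ j, indicatorY x n c j = 1 := by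
      intro j
      rw [indicatorY, if_pos]
      have hS : blockSum x n j = pSum x (blockEnd n j) - pSum x (blockEnd n (j - 1)) :=
        blockSum_eq x n j
      have h1 : e (blockEnd n j) ≤ g (j - 1) :=
        hle (j - 1) _ (le_trans (by omega) (hNge j))
      have h2 : e (blockEnd n (j - 1)) ≤ g (j - 1) :=
        hle (j - 1) _ (hNge (j - 1))
      have habs : |blockSum x n j| ≤ e (blockEnd n j) + e (blockEnd n (j - 1)) := by
        rw [hS]
        have : pSum x (blockEnd n j) - pSum x (blockEnd n (j - 1))
            = (pSum x (blockEnd n j) - L) - (pSum x (blockEnd n (j - 1)) - L) := by ring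
        rw [this]
        exact abs_sub _ _
      simp only [hc]
      linarith
    -- posterior means are bounded below, contradiction
    have hlow : ∀ k : ℕ, 1 ≤ k → 1 / (1 + 2 * baselC) ≤ postMean x n c k := by
      intro k hk
      have hY : ∑ j ∈ Finset.Icc 1 k, indicatorY x n c j = (k : ℝ) := by
        rw [Finset.sum_congr rfl (fun j _ => hy1 j)]
        simp [Nat.card_Icc]
      rw [postMean, hY]
      have hA0 := sum_inv_sq_nonneg k
      have hAle := sum_inv_sq_le k
      have hk1 : (1 : ℝ) ≤ (k : ℝ) := by exact_mod_cast hk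
      set A := ∑ j ∈ Finset.Icc 1 k, (1 : ℝ) / (j : ℝ) ^ 2
      have hC0 := baselC_nonneg
      have step1 : (k : ℝ) / ((k : ℝ) + 2 * baselC) ≤ (A + (k : ℝ)) / ((k : ℝ) + 2 * A) := by
        apply div_le_div₀
        · linarith
        · linarith
        · linarith
        · linarith
      have step2 : 1 / (1 + 2 * baselC) ≤ (k : ℝ) / ((k : ℝ) + 2 * baselC) := by
        rw [div_le_div_iff₀ (by linarith) (by linarith)]
        nlinarith
      linarith
    have hpos : 0 < 1 / (1 + 2 * baselC) := by
      have := baselC_nonneg; positivity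
    have hev : ∀ᶠ k in atTop, postMean x n c k < 1 / (1 + 2 * baselC) :=
      hto.eventually (gt_mem_nhds hpos)
    obtain ⟨k, hk1, hk2⟩ := (hev.and (eventually_ge_atTop 1)).exists
    exact absurd (hlow k hk2) (not_le.mpr hk1)
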